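/- arXiv:2211.00267 — 2 statements merged into one kernel-verified Lean document; each statement's English description precedes it below -/
import Mathlib

section
/- Let K be an algebraically closed valued field, and V, W ⊆ K² definable one-dimensional sets with no isolated points (in the valuation topology), where addition coordinates are combined by V ⊕ W = {(x, y+z) : (x,y) ∈ V, (x,z) ∈ W}. Then V ⊕ W has no isolated points. -/
open MvPolynomial

/-- A set `S ⊆ K²` is constructible of dimension one in the sense given by quantifier
elimination in ACVF: a finite union of sets, each the intersection of a (valuation-)
open set with the zero set of a nonzero polynomial. -/
def OneDimConstructible {K : Type*} [NontriviallyNormedField K]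
    (S : Set (K × K)) : Prop :=
  ∃ (n : ℕ) (U : Fin n → Set (K × K)) (F : Fin n → MvPolynomial (Fin 2) K),
    (∀ i, IsOpen (U i) ∧ F i ≠ 0) ∧
    S = ⋃ i, U i ∩ {z : K × K | MvPolynomial.eval ![z.1, z.2] (F i) = 0}

/-- A point of `S` is isolated if some neighborhood meets `S` only in that point. -/
def NoIsolatedPoints {K : Type*} [NontriviallyNormedField K]
    (S : Set (K × K)) : Prop :=
  ∀ z ∈ S, ∀ O ∈ nhds z, ∃ w ∈ S ∩ O, w ≠ z

/-! ### Auxiliary lemmas -/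

open Polynomial in
/-- Over an algebraically closed ultrametric field, a polynomial whose `m`-th coefficient is
nonzero has a root `t` with `‖t‖ ^ m * ‖coeff m‖ ≤ ‖coeff 0‖`. -/
lemma exists_small_root_aux {K : Type*} [NontriviallyNormedField K] [IsAlgClosed K]
    [IsUltrametricDist K] (r : Polynomial K) (m : ℕ) (hm : 0 < m) (h : r.coeff m ≠ 0) :
    ∃ t : K, r.IsRoot t ∧ ‖t‖ ^ m * ‖r.coeff m‖ ≤ ‖r.coeff 0‖ := by
  classical
  have hr : r ≠ 0 := fun h0 => h (by simp [h0])
  have hmD : m ≤ r.natDegree := le_natDegree_of_ne_zero h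
  have hsplit : Splits r := IsAlgClosed.splits r
  have hcard : Multiset.card r.roots = r.natDegree := by
    have := hsplit.natDegree_eq_card_roots
    simpa using this.symm
  have hne : r.roots ≠ 0 := by
    intro h0
    rw [h0] at hcard
    simp only [Multiset.card_zero] at hcard
    omega
  obtain ⟨t₀, ht₀f, ht₀min⟩ := r.roots.toFinset.exists_min_image norm
    (by simpa [Multiset.toFinset_nonempty] using hne)
  have ht₀mem : t₀ ∈ r.roots := Multiset.mem_toFinset.1 ht₀f
  refine ⟨t₀, isRoot_of_mem_roots ht₀mem, ?_⟩
  have key : ‖t₀‖₊ ^ m * ‖r.coeff m‖₊ ≤ ‖r.coeff 0‖₊ := by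
    have nprod : ∀ s : Multiset K, ‖s.prod‖₊ = (s.map fun a => ‖a‖₊).prod := by
      intro s
      induction s using Multiset.induction_on with
      | empty => simp
      | cons ih => simp_all [nnnorm_mul]
    have hfac := hsplit.eq_prod_roots
    set D := r.natDegree with hD
    -- constant coefficient
    have hc0 : r.coeff 0 = r.leadingCoeff * ((r.roots.map fun a => -a).prod) := by
      conv_lhs => rw [hfac]
      rw [coeff_zero_eq_eval_zero, Polynomial.eval_mul, Polynomial.eval_C,
        Polynomial.eval_multiset_prod, Multiset.map_map]
      simp [Function.comp]
    have hn0 : ‖r.coeff 0‖₊ = ‖r.leadingCoeff‖₊ * ((r.roots.map fun a => ‖a‖₊).prod) := by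
      rw [hc0, nnnorm_mul]
      congr 1
      rw [nprod, Multiset.map_map]
      simp [Function.comp]
    -- m-th coefficient via Vieta
    have hcm : r.coeff m
        = r.leadingCoeff * ((-1) ^ (D - m) * r.roots.esymm (D - m)) := by
      conv_lhs => rw [hfac]
      rw [Polynomial.coeff_C_mul,
        Multiset.prod_X_sub_C_coeff r.roots (by rw [hcard]; exact hmD), hcard]
    have hesym : r.roots.esymm (D - m) ≠ 0 := by
      intro h0
      apply h
      rw [hcm, h0, mul_zero, mul_zero]
    obtain ⟨s', hs'mem', hs'le⟩ :=
      IsUltrametricDist.exists_norm_multiset_sum_le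
        (r.roots.powersetCard (D - m)) (f := Multiset.prod)
    have hpne : r.roots.powersetCard (D - m) ≠ 0 := by
      intro h0
      apply hesym
      rw [Multiset.esymm, h0]
      simp
    have hs'mem := hs'mem' hpne
    rw [Multiset.mem_powersetCard] at hs'mem
    obtain ⟨hs'le', hs'card⟩ := hs'mem
    have h1 : ‖r.roots.esymm (D - m)‖₊ ≤ ‖s'.prod‖₊ := by
      have : ‖(((r.roots.powersetCard (D - m)).map Multiset.prod).sum)‖ ≤ ‖s'.prod‖ := hs'le
      exact_mod_cast this
    have hsub : s' + (r.roots - s') = r.roots := by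
      rw [add_comm]
      exact tsub_add_cancel_of_le hs'le'
    have hcard2 : Multiset.card (r.roots - s') = m := by
      rw [Multiset.card_sub hs'le', hs'card, hcard]
      omega
    have hkey : ‖t₀‖₊ ^ m ≤ ((r.roots - s').map fun a => ‖a‖₊).prod := by
      have heq : ‖t₀‖₊ ^ m = (((r.roots - s').map fun _ => ‖t₀‖₊)).prod := by
        rw [Multiset.map_const', Multiset.prod_replicate, hcard2]
      rw [heq]
      apply Multiset.prod_map_le_prod_map
      intro a ha
      have haroot : a ∈ r.roots := Multiset.mem_of_le (Multiset.sub_le_self _ _) ha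
      have := ht₀min a (Multiset.mem_toFinset.2 haroot)
      exact_mod_cast this
    have hs'prod : ‖s'.prod‖₊ = (s'.map fun a => ‖a‖₊).prod := nprod s'
    have hprodall : ((r.roots).map fun a => ‖a‖₊).prod
        = (s'.map fun a => ‖a‖₊).prod * ((r.roots - s').map fun a => ‖a‖₊).prod := by
      conv_lhs => rw [← hsub]
      rw [Multiset.map_add, Multiset.prod_add]
    have hnm : ‖r.coeff m‖₊ = ‖r.leadingCoeff‖₊ * ‖r.roots.esymm (D - m)‖₊ := by
      rw [hcm, nnnorm_mul, nnnorm_mul, nnnorm_pow, nnnorm_neg, nnnorm_one, one_pow, one_mul]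
    calc ‖t₀‖₊ ^ m * ‖r.coeff m‖₊
        = ‖t₀‖₊ ^ m * (‖r.leadingCoeff‖₊ * ‖r.roots.esymm (D - m)‖₊) := by rw [hnm]
      _ ≤ ‖t₀‖₊ ^ m * (‖r.leadingCoeff‖₊ * ‖s'.prod‖₊) := by gcongr
      _ = ‖r.leadingCoeff‖₊ * ((s'.map fun a => ‖a‖₊).prod * ‖t₀‖₊ ^ m) := by
          rw [hs'prod]; ring
      _ ≤ ‖r.leadingCoeff‖₊
            * ((s'.map fun a => ‖a‖₊).prod * ((r.roots - s').map fun a => ‖a‖₊).prod) := by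
          gcongr
      _ = ‖r.coeff 0‖₊ := by rw [hn0, hprodall]
  exact_mod_cast key

/-- Bivariate polynomial over `K` as a polynomial in the second variable whose coefficients
are polynomials in the first variable. -/
noncomputable def bpoly {K : Type*} [CommSemiring K] (G : MvPolynomial (Fin 2) K) :
    Polynomial (Polynomial K) :=
  MvPolynomial.eval₂ ((Polynomial.C).comp (Polynomial.C))
    ![Polynomial.C Polynomial.X, Polynomial.X] G

lemma bpoly_eval {K : Type*} [CommSemiring K] (G : MvPolynomial (Fin 2) K) (a b : K) :
    Polynomial.eval b (Polynomial.map (Polynomial.evalRingHom a) (bpoly G))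
      = MvPolynomial.eval ![a, b] G := by
  induction G using MvPolynomial.induction_on with
  | C c => simp [bpoly]
  | add p q hp hq =>
      simp only [bpoly, MvPolynomial.eval₂_add, Polynomial.map_add, Polynomial.eval_add,
        map_add] at *
      rw [hp, hq]
  | mul_X p i hp =>
      simp only [bpoly, MvPolynomial.eval₂_mul, MvPolynomial.eval₂_X, Polynomial.map_mul,
        Polynomial.eval_mul, map_mul, MvPolynomial.eval_X] at *
      rw [hp]
      congr 1
      fin_cases i <;> simp

lemma pair_dist {K : Type*} [NormedField K] (a b c d : K) :
    dist (a, b) (c, d) = max ‖a - c‖ ‖b - d‖ := by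
  rw [Prod.dist_eq, dist_eq_norm, dist_eq_norm]

lemma map_taylor_poly {R S : Type*} [CommSemiring R] [CommSemiring S] (g : R →+* S) (u : R)
    (P : Polynomial R) :
    (Polynomial.taylor u P).map g = Polynomial.taylor (g u) (P.map g) := by
  simp only [Polynomial.taylor_apply, Polynomial.map_comp, Polynomial.map_add,
    Polynomial.map_X, Polynomial.map_C]

/-- If `V, W ⊆ K²` are definable one-dimensional sets with no isolated points over an
algebraically closed nonarchimedean valued field, then
`V ⊕ W = {(x, y+z) : (x,y) ∈ V, (x,z) ∈ W}` has no isolated points. -/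
theorem stmt15 {K : Type*} [NontriviallyNormedField K] [IsAlgClosed K]
    [IsUltrametricDist K] (V W : Set (K × K))
    (hV : OneDimConstructible V) (hW : OneDimConstructible W)
    (hVni : NoIsolatedPoints V) (hWni : NoIsolatedPoints W) :
    NoIsolatedPoints {q : K × K | ∃ y z : K, (q.1, y) ∈ V ∧ (q.1, z) ∈ W ∧ q.2 = y + z}
    := by
  rintro ⟨x, w⟩ hq O hO
  obtain ⟨y, z, hVy, hWz, hq2⟩ := hq
  simp only at hVy hWz hq2
  subst hq2
  obtain ⟨n, U, F, hUF, hWeq⟩ := hW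
  have hWz' := hWz
  rw [hWeq] at hWz'
  simp only [Set.mem_iUnion, Set.mem_inter_iff, Set.mem_setOf_eq] at hWz'
  obtain ⟨j, hUj, hGj⟩ := hWz'
  obtain ⟨ε, hε, hball⟩ := Metric.mem_nhds_iff.1 hO
  obtain ⟨δ, hδ, hballU⟩ := Metric.isOpen_iff.1 (hUF j).1 (x, z) hUj
  set Q : Polynomial K := Polynomial.map (Polynomial.evalRingHom x) (bpoly (F j)) with hQdef
  have hQeval : ∀ z' : K, Q.eval z' = MvPolynomial.eval ![x, z'] (F j) := fun z' =>
    bpoly_eval (F j) x z'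
  by_cases hQ : Q = 0
  · -- the fiber over x is everything: move vertically in W
    obtain ⟨c, hc0, hcs⟩ := NormedField.exists_norm_lt K (lt_min hε hδ)
    have hcne : c ≠ 0 := fun h => by simp [h] at hc0
    refine ⟨(x, y + (z + c)), ⟨⟨y, z + c, hVy, ?_, rfl⟩, ?_⟩, ?_⟩
    · -- (x, z + c) ∈ W
      rw [hWeq]
      refine Set.mem_iUnion.2 ⟨j, ⟨hballU ?_, ?_⟩⟩
      · rw [Metric.mem_ball, pair_dist]
        have h1 : ‖x - x‖ = 0 := by simp
        have h2 : z + c - z = c := by ring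
        rw [h1, h2]
        exact max_lt hδ (lt_of_lt_of_le hcs (min_le_right _ _))
      · simp only [Set.mem_setOf_eq]
        rw [← hQeval, hQ]
        simp
    · -- in O
      apply hball
      rw [Metric.mem_ball, pair_dist]
      have h1 : ‖x - x‖ = 0 := by simp
      have h2 : y + (z + c) - (y + z) = c := by ring
      rw [h1, h2]
      exact max_lt hε (lt_of_lt_of_le hcs (min_le_left _ _))
    · -- different point
      intro hcontra
      apply hcne
      have h2 : y + (z + c) = y + z := (Prod.ext_iff.1 hcontra).2
      have h3 : z + c = z := by exact add_left_cancel h2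
      exact add_eq_left.1 h3
  · -- the fiber over x is finite: use continuity of roots
    have hQz : Q.eval z = 0 := by rw [hQeval]; exact hGj
    set R : Polynomial K := Polynomial.taylor z Q with hRdef
    have hR : R ≠ 0 := by
      intro h0
      exact hQ (Polynomial.taylor_injective z (by rw [← hRdef] at *; simp [h0]))
    have hR0 : R.coeff 0 = 0 := by
      rw [hRdef, Polynomial.taylor_coeff_zero]
      exact hQz
    set m := R.natDegree with hmdef
    have hm : 0 < m := by
      rcases Nat.eq_zero_or_pos m with h0 | h
      · exfalso
        apply hR
        have := Polynomial.eq_C_of_natDegree_eq_zero h0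
        rw [this, hR0]
        simp
      · exact h
    have hRm : R.coeff m ≠ 0 := by
      rw [hmdef]
      exact Polynomial.leadingCoeff_ne_zero.2 hR
    -- coefficient functions
    set c0 : K → K := fun x' =>
      Polynomial.eval x' ((Polynomial.taylor (Polynomial.C z) (bpoly (F j))).coeff 0) with hc0def
    set cm : K → K := fun x' =>
      Polynomial.eval x' ((Polynomial.taylor (Polynomial.C z) (bpoly (F j))).coeff m) with hcmdef
    have hck : ∀ (k : ℕ) (x' : K),
        Polynomial.eval x' ((Polynomial.taylor (Polynomial.C z) (bpoly (F j))).coeff k)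
          = (Polynomial.taylor z (Polynomial.map (Polynomial.evalRingHom x') (bpoly (F j)))).coeff k := by
      intro k x'
      rw [← Polynomial.coe_evalRingHom, ← Polynomial.coeff_map, map_taylor_poly]
      simp
    have hc0x : c0 x = 0 := by rw [hc0def]; simp only; rw [hck]; exact hR0
    have hcmx : cm x = R.coeff m := by rw [hcmdef]; simp only; rw [hck]
    have hcont0 : Continuous c0 := Polynomial.continuous _
    have hcontm : Continuous cm := Polynomial.continuous _
    set ρ : ℝ := min (ε / 2) δ with hρdef
    have hρ : 0 < ρ := lt_min (by linarith) hδ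
    set cn : ℝ := ‖R.coeff m‖ with hcndef
    have hcn : 0 < cn := norm_pos_iff.2 hRm
    -- eventually bounds near x
    have hev1 : ∀ᶠ x' in nhds x, cn / 2 < ‖cm x'‖ := by
      have hopen : IsOpen {x' : K | cn / 2 < ‖cm x'‖} := isOpen_lt continuous_const hcontm.norm
      have hmemx : x ∈ {x' : K | cn / 2 < ‖cm x'‖} := by
        simp only [Set.mem_setOf_eq, hcmx, ← hcndef]
        linarith
      exact hopen.mem_nhds hmemx
    have hev2 : ∀ᶠ x' in nhds x, ‖c0 x'‖ < cn / 2 * ρ ^ m := by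
      have hopen : IsOpen {x' : K | ‖c0 x'‖ < cn / 2 * ρ ^ m} :=
        isOpen_lt hcont0.norm continuous_const
      have hmemx : x ∈ {x' : K | ‖c0 x'‖ < cn / 2 * ρ ^ m} := by
        simp only [Set.mem_setOf_eq, hc0x, norm_zero]
        positivity
      exact hopen.mem_nhds hmemx
    obtain ⟨δ₁, hδ₁, hδ₁prop⟩ := Metric.eventually_nhds_iff.1 (hev1.and hev2)
    -- use that (x, y) is not isolated in V
    set rr : ℝ := min (min (ε / 2) δ) δ₁ with hrrdef
    have hrr : 0 < rr := lt_min (lt_min (by linarith) hδ) hδ₁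
    obtain ⟨⟨x', y'⟩, ⟨hV', hballV⟩, hne⟩ :=
      hVni (x, y) hVy _ (Metric.ball_mem_nhds _ hrr)
    rw [Metric.mem_ball, Prod.dist_eq] at hballV
    have hx'x : dist x' x < rr := lt_of_le_of_lt (le_max_left _ _) hballV
    have hy'y : dist y' y < rr := lt_of_le_of_lt (le_max_right _ _) hballV
    rcases eq_or_ne x' x with rfl | hxx
    · -- vertical move in V
      have hy'ney : y' ≠ y := by
        intro h0
        exact hne (by rw [h0])
      refine ⟨(x', y' + z), ⟨⟨y', z, hV', ?_, rfl⟩, ?_⟩, ?_⟩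
      · exact hWz
      · apply hball
        rw [Metric.mem_ball, pair_dist]
        have h2 : y' + z - (y + z) = y' - y := by ring
        rw [h2]
        refine max_lt (by simpa using hε) ?_
        rw [dist_eq_norm] at hy'y
        calc ‖y' - y‖ < rr := hy'y
          _ ≤ ε / 2 := le_trans (min_le_left _ _) (min_le_left _ _)
          _ < ε := by linarith
      · intro hcontra
        rw [Prod.ext_iff] at hcontra
        exact hy'ney (by have := hcontra.2; simpa using this)
    · -- continuity of roots for W over x'
      have hx'δ₁ : dist x' x < δ₁ := lt_of_lt_of_le hx'x (min_le_right _ _)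
      obtain ⟨hbig, hsmall⟩ := hδ₁prop hx'δ₁
      set Q' : Polynomial K := Polynomial.map (Polynomial.evalRingHom x') (bpoly (F j)) with hQ'def
      set R' : Polynomial K := Polynomial.taylor z Q' with hR'def
      have hR'm : R'.coeff m = cm x' := by rw [hcmdef]; simp only; rw [hck]
      have hR'0 : R'.coeff 0 = c0 x' := by rw [hc0def]; simp only; rw [hck]
      have hR'mne : R'.coeff m ≠ 0 := by
        rw [hR'm]
        intro h0
        rw [h0, norm_zero] at hbig
        linarith
      obtain ⟨t, htroot, htb⟩ := exists_small_root_aux R' m hm hR'mne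
      have htρ : ‖t‖ < ρ := by
        have h2 : ‖t‖ ^ m * ‖R'.coeff m‖ < ‖R'.coeff m‖ * ρ ^ m := by
          calc ‖t‖ ^ m * ‖R'.coeff m‖ ≤ ‖R'.coeff 0‖ := htb
            _ = ‖c0 x'‖ := by rw [hR'0]
            _ < cn / 2 * ρ ^ m := hsmall
            _ ≤ ‖R'.coeff m‖ * ρ ^ m := by
                rw [hR'm]
                have := le_of_lt hbig
                nlinarith [pow_pos hρ m]
        have h3 : ‖t‖ ^ m < ρ ^ m := by
          have hpos : 0 < ‖R'.coeff m‖ := norm_pos_iff.2 hR'mne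
          nlinarith
        exact (pow_lt_pow_iff_left₀ (norm_nonneg t) (le_of_lt hρ) hm.ne').1 h3
      -- point of W over x'
      have hWx' : (x', t + z) ∈ W := by
        rw [hWeq]
        refine Set.mem_iUnion.2 ⟨j, ⟨hballU ?_, ?_⟩⟩
        · rw [Metric.mem_ball, pair_dist]
          have h1 : ‖x' - x‖ < δ := by
            rw [← dist_eq_norm]
            exact lt_of_lt_of_le hx'x (le_trans (min_le_left _ _) (min_le_right _ _))
          have h2 : ‖t + z - z‖ < δ := by
            simp only [add_sub_cancel_right]
            exact lt_of_lt_of_le htρ (min_le_right _ _)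
          exact max_lt h1 h2
        · simp only [Set.mem_setOf_eq]
          have : Q'.eval (t + z) = 0 := by
            have := htroot
            rw [Polynomial.IsRoot, hR'def, Polynomial.taylor_eval] at this
            exact this
          rw [← bpoly_eval (F j) x' (t + z), ← hQ'def]
          exact this
      refine ⟨(x', y' + (t + z)), ⟨⟨y', t + z, hV', hWx', rfl⟩, ?_⟩, ?_⟩
      · apply hball
        rw [Metric.mem_ball, pair_dist]
        refine max_lt ?_ ?_
        · rw [← dist_eq_norm]
          calc dist x' x < rr := hx'x
            _ ≤ ε / 2 := le_trans (min_le_left _ _) (min_le_left _ _)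
            _ < ε := by linarith
        · have : y' + (t + z) - (y + z) = (y' - y) + t := by ring
          rw [this]
          calc ‖(y' - y) + t‖ ≤ ‖y' - y‖ + ‖t‖ := norm_add_le _ _
            _ < ε / 2 + ε / 2 := by
                rw [dist_eq_norm] at hy'y
                have hy2 : ‖y' - y‖ < ε / 2 :=
                  lt_of_lt_of_le hy'y (le_trans (min_le_left _ _) (min_le_left _ _))
                have ht2 : ‖t‖ < ε / 2 := lt_of_lt_of_le htρ (min_le_left _ _)
                linarith
            _ = ε := by ring
      · intro hcontra
        rw [Prod.ext_iff] at hcontra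
        exact hxx (by have := hcontra.1; simpa using this)
end

section
/- Let K be an algebraically closed field and F, G ∈ K[x,y] nonzero polynomials with no common non-constant divisor. Then the set of common zeros of F and G in K² is finite, of cardinality at most deg(F)·deg(G). -/
open MvPolynomial

namespace Stmt18Aux
open scoped Classical

variable {K : Type*} [Field K]


variable {K : Type*} [Field K]

lemma dsum (u : Fin 2 →₀ ℕ) : (u.sum fun _ e => e) = u 0 + u 1 := by
  rw [Finsupp.sum_fintype _ _ (fun _ => rfl), Fin.sum_univ_two]

lemma exists_max_mono (p : MvPolynomial (Fin 2) K) (hp : p ≠ 0) :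
    ∃ a ∈ p.support, (a.sum fun _ e => e) = p.totalDegree ∧
      ∀ u ∈ p.support, (u.sum fun _ e => e) = p.totalDegree → u 0 ≤ a 0 := by
  classical
  obtain ⟨a0, ha0, he⟩ := Finset.exists_mem_eq_sup p.support
    (Finset.nonempty_iff_ne_empty.mpr (by simpa using hp)) (fun u => u.sum fun _ e => e)
  set S := p.support.filter (fun u => (u.sum fun _ e => e) = p.totalDegree) with hS
  have hne : S.Nonempty := ⟨a0, Finset.mem_filter.mpr ⟨ha0, by rw [totalDegree, he]⟩⟩
  obtain ⟨a, haS, hmax⟩ := Finset.exists_max_image S (fun u => u 0) hne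
  rw [Finset.mem_filter] at haS
  exact ⟨a, haS.1, haS.2, fun u hu hd => hmax u (Finset.mem_filter.mpr ⟨hu, hd⟩)⟩

lemma totalDegree_mul_eq {p q : MvPolynomial (Fin 2) K} (hp : p ≠ 0) (hq : q ≠ 0) :
    (p * q).totalDegree = p.totalDegree + q.totalDegree := by
  classical
  refine le_antisymm (totalDegree_mul p q) ?_
  obtain ⟨a, hap, hasum, hamax⟩ := exists_max_mono p hp
  obtain ⟨b, hbq, hbsum, hbmax⟩ := exists_max_mono q hq
  have hcoeff : coeff (a + b) (p * q) = coeff a p * coeff b q := by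
    rw [coeff_mul]
    refine Finset.sum_eq_single_of_mem (a, b) (Finset.HasAntidiagonal.mem_antidiagonal.mpr rfl) ?_
    rintro ⟨u, v⟩ huv hne
    have huv' : u + v = a + b := Finset.HasAntidiagonal.mem_antidiagonal.mp huv
    by_contra hne0
    have hu : u ∈ p.support := by
      rw [mem_support_iff]; intro h; apply hne0; rw [h, zero_mul]
    have hv : v ∈ q.support := by
      rw [mem_support_iff]; intro h; apply hne0; rw [h, mul_zero]
    have hus : (u.sum fun _ e => e) ≤ p.totalDegree := le_totalDegree hu
    have hvs : (v.sum fun _ e => e) ≤ q.totalDegree := le_totalDegree hv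
    have hsum0 : u 0 + v 0 = a 0 + b 0 := by
      have := congrArg (fun w : Fin 2 →₀ ℕ => w 0) huv'
      simpa using this
    have hsum1 : u 1 + v 1 = a 1 + b 1 := by
      have := congrArg (fun w : Fin 2 →₀ ℕ => w 1) huv'
      simpa using this
    rw [dsum] at hus hvs hasum hbsum
    have hueq : (u.sum fun _ e => e) = p.totalDegree := by rw [dsum]; omega
    have hveq : (v.sum fun _ e => e) = q.totalDegree := by rw [dsum]; omega
    have hu0 : u 0 ≤ a 0 := hamax u hu hueq
    have hv0 : v 0 ≤ b 0 := hbmax v hv hveq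
    rw [dsum] at hueq hveq
    have hu0' : u 0 = a 0 := by omega
    have hu1' : u 1 = a 1 := by omega
    have hv0' : v 0 = b 0 := by omega
    have hv1' : v 1 = b 1 := by omega
    have hua : u = a := by
      ext i
      fin_cases i
      · exact hu0'
      · exact hu1'
    have hvb : v = b := by
      ext i
      fin_cases i
      · exact hv0'
      · exact hv1'
    exact hne (by rw [hua, hvb])
  have hne : coeff (a + b) (p * q) ≠ 0 := by
    rw [hcoeff]
    exact mul_ne_zero (mem_support_iff.mp hap) (mem_support_iff.mp hbq)
  have := le_totalDegree (mem_support_iff.mpr hne)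
  calc p.totalDegree + q.totalDegree = ((a + b).sum fun _ e => e) := by
        rw [dsum] at *
        simp only [Finsupp.add_apply]
        omega
    _ ≤ (p * q).totalDegree := this




/-- triangle-ish counting function -/
def f (x : ℕ) : ℕ := ∑ k ∈ Finset.range (x+1), (k+1)

lemma f_succ (x : ℕ) : f (x+1) = f x + (x+2) := by
  simp [f, Finset.sum_range_succ]

lemma f_key (m n N : ℕ) : f (m+n+N) + f N = f (n+N) + f (m+N) + m*n := by
  induction m with
  | zero => simp [Nat.add_comm]
  | succ m ih =>
      have h1 : m+1+n+N = (m+n+N)+1 := by omega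
      have h2 : m+1+N = (m+N)+1 := by omega
      rw [h1, h2, f_succ, f_succ]
      have : (m+1)*n = m*n + n := by ring
      omega

/-- the finset of pairs with sum ≤ x -/
def S (x : ℕ) : Finset (ℕ × ℕ) := (Finset.range (x+1)).biUnion Finset.HasAntidiagonal.antidiagonal

lemma mem_S {x : ℕ} {p : ℕ × ℕ} : p ∈ S x ↔ p.1 + p.2 ≤ x := by
  simp only [S, Finset.mem_biUnion, Finset.mem_range, Finset.HasAntidiagonal.mem_antidiagonal]
  constructor
  · rintro ⟨k, hk, rfl⟩; omega
  · intro h; exact ⟨p.1 + p.2, by omega, rfl⟩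

lemma card_S (x : ℕ) : (S x).card = f x := by
  rw [S, Finset.card_biUnion, f]
  · exact Finset.sum_congr rfl fun k _ => Finset.Nat.card_antidiagonal k
  · intro i _ j _ hij
    simp only [Finset.disjoint_left, Finset.HasAntidiagonal.mem_antidiagonal]
    rintro p rfl h; exact hij h

/-- pairs as finsupps -/
noncomputable def T (x : ℕ) : Finset (Fin 2 →₀ ℕ) :=
  (S x).image (fun p => (Finsupp.single (0 : Fin 2) p.1 + Finsupp.single (1 : Fin 2) p.2 :
    Fin 2 →₀ ℕ))

lemma pair_apply0 (p : ℕ × ℕ) :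
    ((Finsupp.single (0 : Fin 2) p.1 + Finsupp.single (1 : Fin 2) p.2 : Fin 2 →₀ ℕ)) 0 = p.1 := by
  rw [Finsupp.add_apply, Finsupp.single_apply, Finsupp.single_apply]
  simp

lemma pair_apply1 (p : ℕ × ℕ) :
    ((Finsupp.single (0 : Fin 2) p.1 + Finsupp.single (1 : Fin 2) p.2 : Fin 2 →₀ ℕ)) 1 = p.2 := by
  rw [Finsupp.add_apply, Finsupp.single_apply, Finsupp.single_apply]
  simp

lemma pair_inj : Function.Injective
    (fun p : ℕ × ℕ => (Finsupp.single (0 : Fin 2) p.1 + Finsupp.single (1 : Fin 2) p.2 :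
      Fin 2 →₀ ℕ)) := by
  intro p q h
  have h0 := congrArg (fun w : Fin 2 →₀ ℕ => w 0) h
  have h1 := congrArg (fun w : Fin 2 →₀ ℕ => w 1) h
  simp only [pair_apply0, pair_apply1] at h0 h1
  exact Prod.ext h0 h1

lemma card_T (x : ℕ) : (T x).card = f x := by
  rw [T, Finset.card_image_of_injective _ pair_inj, card_S]

lemma set_eq_T (x : ℕ) :
    { n : Fin 2 →₀ ℕ | (n.sum fun _ e => e) ≤ x } = ↑(T x) := by
  ext n
  simp only [Set.mem_setOf_eq, Finset.coe_image, Set.mem_image, T, Finset.mem_coe,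
    Finset.mem_image]
  constructor
  · intro h
    refine ⟨(n 0, n 1), mem_S.mpr ?_, ?_⟩
    · rw [dsum] at h; exact h
    · ext i
      fin_cases i
      · exact pair_apply0 (n 0, n 1)
      · exact pair_apply1 (n 0, n 1)
  · rintro ⟨p, hp, rfl⟩
    rw [dsum, pair_apply0, pair_apply1]
    exact mem_S.mp hp


lemma finrank_restrict (x : ℕ) :
    Module.finrank K (restrictTotalDegree (Fin 2) K x) = f x := by
  have h : restrictTotalDegree (Fin 2) K x = restrictSupport K ↑(T x) := by
    rw [restrictTotalDegree, set_eq_T]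
  rw [h]
  rw [Module.finrank_eq_card_basis (basisRestrictSupport K (↑(T x) : Set (Fin 2 →₀ ℕ)))]
  rw [← card_T x]
  exact Fintype.card_coe (T x)




/-- evaluation at a point of K² as a linear map -/
noncomputable def evalL (z : K × K) : MvPolynomial (Fin 2) K →ₗ[K] K where
  toFun p := eval ![z.1, z.2] p
  map_add' p q := by simp
  map_smul' c p := by simp [MvPolynomial.smul_eval]

@[simp] lemma evalL_apply (z : K × K) (p : MvPolynomial (Fin 2) K) :
    evalL z p = eval ![z.1, z.2] p := rfl

/-- evaluation at a finite set of points -/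
noncomputable def evalsL (s : Finset (K × K)) :
    MvPolynomial (Fin 2) K →ₗ[K] (↥s → K) :=
  LinearMap.pi (fun z => evalL z.1)

/-- a linear polynomial separating two distinct points -/
noncomputable def sep (p q : K × K) : MvPolynomial (Fin 2) K :=
  if p.1 ≠ q.1 then C (p.1 - q.1)⁻¹ * (X 0 - C q.1) else C (p.2 - q.2)⁻¹ * (X 1 - C q.2)

lemma sep_totalDegree (p q : K × K) : (sep p q).totalDegree ≤ 1 := by
  have hX : ∀ (i : Fin 2) (c : K), (X i - C c : MvPolynomial (Fin 2) K).totalDegree ≤ 1 := by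
    intro i c
    rw [sub_eq_add_neg, ← C_neg]
    refine (totalDegree_add _ _).trans ?_
    simp [totalDegree_X, totalDegree_C]
  rw [sep]
  split_ifs with h
  · exact (totalDegree_mul _ _).trans (by simpa [totalDegree_C] using hX 0 q.1)
  · exact (totalDegree_mul _ _).trans (by simpa [totalDegree_C] using hX 1 q.2)

lemma sep_eval_self {p q : K × K} (h : p ≠ q) : eval ![p.1, p.2] (sep p q) = 1 := by
  rw [sep]
  split_ifs with h1
  · simp only [map_mul, eval_C, map_sub, eval_X]
    rw [show (![p.1, p.2] : Fin 2 → K) 0 = p.1 from rfl]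
    field_simp
  · push_neg at h1
    have h2 : p.2 ≠ q.2 := by
      intro h2; exact h (Prod.ext h1 h2)
    simp only [map_mul, eval_C, map_sub, eval_X]
    rw [show (![p.1, p.2] : Fin 2 → K) 1 = p.2 from rfl]
    field_simp

lemma sep_eval_other (p q : K × K) : eval ![q.1, q.2] (sep p q) = 0 := by
  rw [sep]
  split_ifs with h1
  · simp only [map_mul, eval_C, map_sub, eval_X]
    rw [show (![q.1, q.2] : Fin 2 → K) 0 = q.1 from rfl]
    simp
  · simp only [map_mul, eval_C, map_sub, eval_X]
    rw [show (![q.1, q.2] : Fin 2 → K) 1 = q.2 from rfl]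
    simp

/-- Lagrange-type basis polynomial for a point in a finite set -/
noncomputable def lag (s : Finset (K × K)) (p : K × K) : MvPolynomial (Fin 2) K :=
  ∏ q ∈ s.erase p, sep p q

lemma lag_totalDegree (s : Finset (K × K)) (p : K × K) :
    (lag s p).totalDegree ≤ s.card := by
  refine (totalDegree_finset_prod _ _).trans ?_
  calc ∑ q ∈ s.erase p, (sep p q).totalDegree ≤ ∑ _q ∈ s.erase p, 1 :=
        Finset.sum_le_sum fun q _ => sep_totalDegree p q
    _ = (s.erase p).card := by simp
    _ ≤ s.card := Finset.card_erase_le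

lemma lag_eval_self (s : Finset (K × K)) {p : K × K} (hp : p ∈ s) :
    eval ![p.1, p.2] (lag s p) = 1 := by
  rw [lag, map_prod]
  refine Finset.prod_eq_one fun q hq => ?_
  exact sep_eval_self (Finset.ne_of_mem_erase hq).symm

lemma lag_eval_other (s : Finset (K × K)) {p q : K × K} (hq : q ∈ s) (hne : q ≠ p) :
    eval ![q.1, q.2] (lag s p) = 0 := by
  rw [lag, map_prod]
  exact Finset.prod_eq_zero (Finset.mem_erase.mpr ⟨hne, hq⟩) (sep_eval_other p q)

/-- interpolation: evalsL restricted to low degrees is surjective -/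
lemma evalsL_surj (s : Finset (K × K)) (d : ℕ) (hd : s.card ≤ d) (v : ↥s → K) :
    ∃ P ∈ restrictTotalDegree (Fin 2) K d, evalsL s P = v := by
  classical
  refine ⟨∑ p ∈ s.attach, C (v p) * lag s p.1, ?_, ?_⟩
  · rw [mem_restrictTotalDegree]
    refine (totalDegree_finset_sum _ _).trans ?_
    refine Finset.sup_le fun p _ => ?_
    refine (totalDegree_mul _ _).trans ?_
    simpa [totalDegree_C] using le_trans (lag_totalDegree s p.1) hd
  · funext q
    simp only [evalsL, LinearMap.pi_apply, evalL_apply, map_sum, map_mul, eval_C]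
    rw [Finset.sum_eq_single q]
    · rw [lag_eval_self s q.2, mul_one]
    · intro p _ hpq
      rw [lag_eval_other s q.2 (fun h => hpq (Subtype.ext h.symm)), mul_zero]
    · intro h
      exact absurd (Finset.mem_attach s q) h




lemma mulLeft_inj {F : MvPolynomial (Fin 2) K} (hF : F ≠ 0) :
    Function.Injective (LinearMap.mulLeft K F) := by
  intro x y h
  simp only [LinearMap.mulLeft_apply] at h
  exact mul_left_cancel₀ hF h

set_option synthInstance.maxHeartbeats 1000000 in
set_option maxHeartbeats 1000000 in
/-- key bound: a finite set of common zeros has cardinality at most deg F * deg G -/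
theorem card_le_deg_mul_deg (F G : MvPolynomial (Fin 2) K) (hF : F ≠ 0) (hG : G ≠ 0)
    (hrp : IsRelPrime F G) (s : Finset (K × K))
    (hs : ∀ z ∈ s, eval ![z.1, z.2] F = 0 ∧ eval ![z.1, z.2] G = 0) :
    s.card ≤ F.totalDegree * G.totalDegree := by
  set m := F.totalDegree
  set n := G.totalDegree
  set N := s.card
  set d := m + n + N with hd
  set Rd := restrictTotalDegree (Fin 2) K d with hRd
  set g : Rd →ₗ[K] (↥s → K) := (evalsL s).comp Rd.subtype with hg
  -- surjectivity
  have hsurj : Function.Surjective g := by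
    intro v
    obtain ⟨P, hP, hPv⟩ := evalsL_surj s d (by omega) v
    exact ⟨⟨P, hP⟩, hPv⟩
  have hrange : Module.finrank K (LinearMap.range g) = N := by
    rw [LinearMap.range_eq_top.mpr hsurj, finrank_top, Module.finrank_pi, Fintype.card_coe]
  -- the two subspaces
  set A := Submodule.map (LinearMap.mulLeft K F) (restrictTotalDegree (Fin 2) K (n + N)) with hA
  set B := Submodule.map (LinearMap.mulLeft K G) (restrictTotalDegree (Fin 2) K (m + N)) with hB
  have hAfin : Module.finrank K A = f (n + N) :=
    ((Submodule.equivMapOfInjective _ (mulLeft_inj hF) _).symm.finrank_eq).trans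
      (finrank_restrict (K := K) _)
  have hBfin : Module.finrank K B = f (m + N) :=
    ((Submodule.equivMapOfInjective _ (mulLeft_inj hG) _).symm.finrank_eq).trans
      (finrank_restrict (K := K) _)
  -- A ⊔ B is inside Rd
  have hsub : A ⊔ B ≤ Rd := by
    refine sup_le ?_ ?_
    · rintro x ⟨h, hh, rfl⟩
      rw [SetLike.mem_coe, mem_restrictTotalDegree] at hh
      show (LinearMap.mulLeft K F) h ∈ restrictTotalDegree (Fin 2) K d
      rw [mem_restrictTotalDegree, LinearMap.mulLeft_apply]
      refine (totalDegree_mul _ _).trans ?_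
      omega
    · rintro x ⟨h, hh, rfl⟩
      rw [SetLike.mem_coe, mem_restrictTotalDegree] at hh
      show (LinearMap.mulLeft K G) h ∈ restrictTotalDegree (Fin 2) K d
      rw [mem_restrictTotalDegree, LinearMap.mulLeft_apply]
      refine (totalDegree_mul _ _).trans ?_
      omega
  -- A ⊔ B is inside the kernel of evaluation
  have hker0 : A ⊔ B ≤ LinearMap.ker (evalsL s) := by
    refine sup_le ?_ ?_
    · rintro x ⟨h, hh, rfl⟩
      rw [LinearMap.mem_ker]
      funext z
      simp only [evalsL, LinearMap.pi_apply, LinearMap.mulLeft_apply]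
      show eval ![z.1.1, z.1.2] (F * h) = 0
      rw [map_mul, (hs z.1 z.2).1, zero_mul]
    · rintro x ⟨h, hh, rfl⟩
      rw [LinearMap.mem_ker]
      funext z
      simp only [evalsL, LinearMap.pi_apply, LinearMap.mulLeft_apply]
      show eval ![z.1.1, z.1.2] (G * h) = 0
      rw [map_mul, (hs z.1 z.2).2, zero_mul]
  -- A ⊓ B is inside (F*G) • (polynomials of degree ≤ N)
  have hinf : A ⊓ B ≤
      Submodule.map (LinearMap.mulLeft K (F * G)) (restrictTotalDegree (Fin 2) K N) := by
    rintro x ⟨⟨h, hh, hxh⟩, ⟨k, hk, hxk⟩⟩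
    simp only [LinearMap.mulLeft_apply] at hxh hxk
    rcases eq_or_ne h 0 with rfl | hh0
    · refine ⟨0, Submodule.zero_mem _, ?_⟩
      simp [← hxh]
    · have hdvd : G ∣ F * h := ⟨k, hxh.trans hxk.symm⟩
      obtain ⟨u, hu⟩ := hrp.symm.dvd_of_dvd_mul_left hdvd
      have hu0 : u ≠ 0 := by rintro rfl; rw [mul_zero] at hu; exact hh0 hu
      have hdeg : u.totalDegree ≤ N := by
        have := totalDegree_mul_eq hG hu0
        rw [← hu] at this
        rw [SetLike.mem_coe, mem_restrictTotalDegree] at hh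
        omega
      refine ⟨u, (mem_restrictTotalDegree _ _ _).mpr hdeg, ?_⟩
      rw [LinearMap.mulLeft_apply, ← hxh, hu]
      ring
  have hinffin : Module.finrank K (A ⊓ B : Submodule K (MvPolynomial (Fin 2) K)) ≤ f N := by
    refine le_trans (Submodule.finrank_mono hinf) ?_
    refine le_trans (Submodule.finrank_map_le _ _) ?_
    rw [finrank_restrict]
  -- rank-nullity and the kernel bound
  have hrn : Module.finrank K (LinearMap.range g) + Module.finrank K (LinearMap.ker g)
      = Module.finrank K Rd := LinearMap.finrank_range_add_finrank_ker g
  have hkerge : Module.finrank K (A ⊔ B : Submodule K (MvPolynomial (Fin 2) K))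
      ≤ Module.finrank K (LinearMap.ker g) := by
    have hle : Submodule.comap Rd.subtype (A ⊔ B) ≤ LinearMap.ker g := by
      intro x hx
      rw [Submodule.mem_comap] at hx
      rw [LinearMap.mem_ker]
      exact hker0 hx
    calc Module.finrank K (A ⊔ B : Submodule K (MvPolynomial (Fin 2) K))
        = Module.finrank K (Submodule.comap Rd.subtype (A ⊔ B)) :=
          ((Submodule.comapSubtypeEquivOfLe hsub).finrank_eq).symm
      _ ≤ Module.finrank K (LinearMap.ker g) := Submodule.finrank_mono hle
  have hsupinf : Module.finrank K (A ⊔ B : Submodule K (MvPolynomial (Fin 2) K))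
      + Module.finrank K (A ⊓ B : Submodule K (MvPolynomial (Fin 2) K))
      = f (n + N) + f (m + N) := by
    rw [← hAfin, ← hBfin]
    exact Submodule.finrank_sup_add_finrank_inf_eq A B
  have hRdfin : Module.finrank K Rd = f d := finrank_restrict (K := K) d
  have hkey := f_key m n N
  have hfd : f d = f (m + n + N) := by rw [hd]
  show N ≤ m * n
  omega


end Stmt18Aux

open Stmt18Aux in
/-- Bézout's theorem (affine inequality form): over an algebraically closed field, two
nonzero polynomials `F, G ∈ K[x,y]` with no common non-constant divisor have at most
`deg F · deg G` common zeros in `K²`; in particular their set of common zeros is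
finite. -/
theorem stmt18 {K : Type*} [Field K] [IsAlgClosed K]
    (F G : MvPolynomial (Fin 2) K) (hF : F ≠ 0) (hG : G ≠ 0)
    (hcop : ∀ d : MvPolynomial (Fin 2) K, d ∣ F → d ∣ G → d.totalDegree = 0) :
    {z : K × K | MvPolynomial.eval ![z.1, z.2] F = 0 ∧
        MvPolynomial.eval ![z.1, z.2] G = 0}.Finite ∧
      {z : K × K | MvPolynomial.eval ![z.1, z.2] F = 0 ∧
        MvPolynomial.eval ![z.1, z.2] G = 0}.ncard ≤ F.totalDegree * G.totalDegree := by
  set Z := {z : K × K | MvPolynomial.eval ![z.1, z.2] F = 0 ∧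
      MvPolynomial.eval ![z.1, z.2] G = 0} with hZ
  have hrp : IsRelPrime F G := by
    intro e heF heG
    have h0 := hcop e heF heG
    have he0 : e ≠ 0 := by rintro rfl; exact hF (zero_dvd_iff.mp heF)
    have hs := (totalDegree_eq_zero_iff _ e).mp h0
    have hC : e = C (coeff 0 e) := by
      ext mo
      rw [coeff_C]
      by_cases hmo : 0 = mo
      · rw [if_pos hmo, ← hmo]
      · rw [if_neg hmo]
        by_contra hne
        have hmem : mo ∈ e.support := mem_support_iff.mpr hne
        exact hmo (Finsupp.ext fun x => hs mo hmem x).symm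
    have hc0 : coeff 0 e ≠ 0 := by intro h; apply he0; rw [hC, h, C_0]
    rw [hC]
    exact IsUnit.of_mul_eq_one (C (coeff 0 e)⁻¹)
      (by rw [← C_mul, mul_inv_cancel₀ hc0, C_1])
  have hbound : ∀ t : Finset (K × K), ↑t ⊆ Z → t.card ≤ F.totalDegree * G.totalDegree := by
    intro t ht
    refine card_le_deg_mul_deg F G hF hG hrp t fun z hz => ?_
    exact ht hz
  have hfin : Z.Finite := by
    by_contra hinf
    obtain ⟨t, hts, htfin, htcard⟩ := Set.Infinite.exists_subset_ncard_eq hinf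
      (F.totalDegree * G.totalDegree + 1)
    have hb := hbound htfin.toFinset (by simpa using hts)
    rw [← Set.ncard_eq_toFinset_card t htfin] at hb
    omega
  refine ⟨hfin, ?_⟩
  rw [Set.ncard_eq_toFinset_card Z hfin]
  exact hbound hfin.toFinset (by simp)
end
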